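/- Any classical deterministic error-free strategy for game G_n (n ≥ 3) provides an appropriate answer on at most two legitimate questions; on all other legitimate questions at least one player outputs the abstain symbol ⊥. -/
import Mathlib

lemma my_sum_split {n : ℕ} (i j : Fin n) (hij : i ≠ j) (g : Fin n → ℕ) :
    ∑ t, g t = g i + g j + ∑ t ∈ (Finset.univ.erase i).erase j, g t := by
  have h1 := Finset.add_sum_erase Finset.univ g (Finset.mem_univ i)
  have h2 := Finset.add_sum_erase (Finset.univ.erase i) g
    (Finset.mem_erase.mpr ⟨hij.symm, Finset.mem_univ j⟩)
  omega

lemma my_even_diff {n : ℕ} (x y : Fin n → Bool)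
    (hx : Even (Finset.univ.filter (fun i => x i = true)).card)
    (hy : Even (Finset.univ.filter (fun i => y i = true)).card) :
    Even (Finset.univ.filter (fun i => x i ≠ y i)).card := by
  rw [Nat.even_iff] at *
  rw [Finset.card_filter] at *
  have key : ∀ i : Fin n, (if x i ≠ y i then 1 else 0) +
      2 * (if x i = true ∧ y i = true then 1 else 0) =
      (if x i = true then 1 else 0) + (if y i = true then 1 else 0) := by
    intro i; cases x i <;> cases y i <;> simp
  have hsum : (∑ i, if x i ≠ y i then 1 else 0) +
      2 * (∑ i, if x i = true ∧ y i = true then 1 else 0) =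
      (∑ i, if x i = true then 1 else 0) + (∑ i : Fin n, if y i = true then 1 else 0) := by
    rw [← Finset.sum_add_distrib, Finset.mul_sum, ← Finset.sum_add_distrib]
    exact Finset.sum_congr rfl fun i _ => key i
  omega

theorem error_free_strategy_at_most_two (n : ℕ) (hn : 3 ≤ n)
    (f : Fin n → Bool → Option Bool)
    (herr : ∀ x : Fin n → Bool,
      Even (Finset.univ.filter (fun i => x i = true)).card →
      (∀ i, (f i (x i)).isSome) →
      (Finset.univ.filter (fun i => f i (x i) = some true)).card % 2 =
        ((Finset.univ.filter (fun i => x i = true)).card / 2) % 2) :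
    (Finset.univ.filter (fun x : Fin n → Bool =>
        Even (Finset.univ.filter (fun i => x i = true)).card ∧
        ∀ i, (f i (x i)).isSome)).card ≤ 2 := by
  by_contra h
  push_neg at h
  rw [Finset.two_lt_card_iff] at h
  obtain ⟨x, y, z, hx, hy, hz, hxy, hxz, hyz⟩ := h
  rw [Finset.mem_filter] at hx hy hz
  obtain ⟨-, hxE, hxL⟩ := hx
  obtain ⟨-, hyE, hyL⟩ := hy
  obtain ⟨-, hzE, hzL⟩ := hz
  set D : Finset (Fin n) := Finset.univ.filter (fun i => x i ≠ y i) with hD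
  set D' : Finset (Fin n) := Finset.univ.filter (fun i => x i ≠ z i) with hD'
  have hDe : Even D.card := my_even_diff x y hxE hyE
  have hD'e : Even D'.card := my_even_diff x z hxE hzE
  have hDne : D.Nonempty := by
    obtain ⟨i, hi⟩ := Function.ne_iff.mp hxy
    exact ⟨i, by simp [hD, hi]⟩
  have hD'ne : D'.Nonempty := by
    obtain ⟨i, hi⟩ := Function.ne_iff.mp hxz
    exact ⟨i, by simp [hD', hi]⟩
  have hD2 : 2 ≤ D.card := by
    have := Finset.card_pos.mpr hDne
    rcases hDe with ⟨k, hk⟩; omega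
  have hD'2 : 2 ≤ D'.card := by
    have := Finset.card_pos.mpr hD'ne
    rcases hD'e with ⟨k, hk⟩; omega
  have hDD' : D ≠ D' := by
    intro hEq
    apply hyz
    funext i
    have h1 : (x i ≠ y i) ↔ (x i ≠ z i) := by
      have := Finset.ext_iff.mp hEq i
      simpa [hD, hD'] using this
    revert h1
    cases x i <;> cases y i <;> cases z i <;> simp
  -- 3 ≤ (D ∪ D').card
  have hT3 : 2 < (D ∪ D').card := by
    have hex : ∃ a, (a ∈ D ∧ a ∉ D') ∨ (a ∈ D' ∧ a ∉ D) := by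
      by_contra hc
      push_neg at hc
      exact hDD' (Finset.ext fun a => by have := hc a; tauto)
    obtain ⟨a, ha | ha⟩ := hex
    · have hsub : insert a D' ⊆ D ∪ D' := by
        intro t ht
        rcases Finset.mem_insert.mp ht with rfl | ht
        · exact Finset.mem_union_left _ ha.1
        · exact Finset.mem_union_right _ ht
      have := Finset.card_le_card hsub
      rw [Finset.card_insert_of_notMem ha.2] at this
      omega
    · have hsub : insert a D ⊆ D ∪ D' := by
        intro t ht
        rcases Finset.mem_insert.mp ht with rfl | ht
        · exact Finset.mem_union_right _ ha.1
        · exact Finset.mem_union_left _ ht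
      have := Finset.card_le_card hsub
      rw [Finset.card_insert_of_notMem ha.2] at this
      omega
  obtain ⟨i, j, k, hiT, hjT, hkT, hij, hik, hjk⟩ := Finset.two_lt_card_iff.mp hT3
  -- both inputs defined on D ∪ D'
  have hboth : ∀ t ∈ D ∪ D', (f t (!(x t))).isSome := by
    intro t ht
    rcases Finset.mem_union.mp ht with ht | ht
    · have hne : x t ≠ y t := by simpa [hD] using ht
      have : y t = !(x t) := by revert hne; cases x t <;> cases y t <;> simp
      rw [← this]; exact hyL t
    · have hne : x t ≠ z t := by simpa [hD'] using ht
      have : z t = !(x t) := by revert hne; cases x t <;> cases z t <;> simp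
      rw [← this]; exact hzL t
  -- abbreviations
  set W : ℕ := (Finset.univ.filter (fun i => x i = true)).card with hW
  set A : ℕ := (Finset.univ.filter (fun i => f i (x i) = some true)).card with hA
  have h0 : A % 2 = (W / 2) % 2 := herr x hxE hxL
  have hWe : W % 2 = 0 := Nat.even_iff.mp hxE
  -- key lemma for a pair of flipped coordinates
  have key : ∀ p q : Fin n, p ≠ q → p ∈ D ∪ D' → q ∈ D ∪ D' →
      ∃ W' A' : ℕ,
        W' + ((if x p = true then 1 else 0) + (if x q = true then 1 else 0)) =
          W + ((if x p = true then 0 else 1) + (if x q = true then 0 else 1)) ∧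
        A' + ((if f p (x p) = some true then 1 else 0) + (if f q (x q) = some true then 1 else 0)) =
          A + ((if f p (!(x p)) = some true then 1 else 0) + (if f q (!(x q)) = some true then 1 else 0)) ∧
        A' % 2 = (W' / 2) % 2 := by
    intro p q hpq hp hq
    set x' : Fin n → Bool := fun t => if t = p then !(x p) else if t = q then !(x q) else x t with hx'
    have hx'p : x' p = !(x p) := by simp [hx']
    have hx'q : x' q = !(x q) := by simp [hx', hpq.symm]
    have hx'o : ∀ t, t ≠ p → t ≠ q → x' t = x t := by
      intro t h1 h2; simp [hx', h1, h2]
    set W' : ℕ := (Finset.univ.filter (fun i => x' i = true)).card with hW'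
    set A' : ℕ := (Finset.univ.filter (fun i => f i (x' i) = some true)).card with hA'
    have hWrel : W' + ((if x p = true then 1 else 0) + (if x q = true then 1 else 0)) =
        W + ((if x p = true then 0 else 1) + (if x q = true then 0 else 1)) := by
      rw [hW', hW, Finset.card_filter, Finset.card_filter,
        my_sum_split p q hpq (fun t => if x' t = true then 1 else 0),
        my_sum_split p q hpq (fun t => if x t = true then 1 else 0)]
      have hrest : ∑ t ∈ (Finset.univ.erase p).erase q, (if x' t = true then 1 else 0) =
          ∑ t ∈ (Finset.univ.erase p).erase q, (if x t = true then 1 else 0) := by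
        refine Finset.sum_congr rfl fun t ht => ?_
        rw [Finset.mem_erase, Finset.mem_erase] at ht
        rw [hx'o t ht.2.1 ht.1]
      rw [hx'p, hx'q, hrest]
      cases x p <;> cases x q <;> simp <;> omega
    have hArel : A' + ((if f p (x p) = some true then 1 else 0) + (if f q (x q) = some true then 1 else 0)) =
        A + ((if f p (!(x p)) = some true then 1 else 0) + (if f q (!(x q)) = some true then 1 else 0)) := by
      rw [hA', hA, Finset.card_filter, Finset.card_filter,
        my_sum_split p q hpq (fun t => if f t (x' t) = some true then 1 else 0),
        my_sum_split p q hpq (fun t => if f t (x t) = some true then 1 else 0)]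
      have hrest : ∑ t ∈ (Finset.univ.erase p).erase q, (if f t (x' t) = some true then 1 else 0) =
          ∑ t ∈ (Finset.univ.erase p).erase q, (if f t (x t) = some true then 1 else 0) := by
        refine Finset.sum_congr rfl fun t ht => ?_
        rw [Finset.mem_erase, Finset.mem_erase] at ht
        rw [hx'o t ht.2.1 ht.1]
      rw [hx'p, hx'q, hrest]
      omega
    have hlive : ∀ t, (f t (x' t)).isSome := by
      intro t
      by_cases h1 : t = p
      · subst h1; rw [hx'p]; exact hboth t hp
      by_cases h2 : t = q
      · subst h2; rw [hx'q]; exact hboth t hq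
      · rw [hx'o t h1 h2]; exact hxL t
    have hEven : Even W' := by
      rw [Nat.even_iff]
      rcases Bool.dichotomy (x p) with hp1 | hp1 <;> rcases Bool.dichotomy (x q) with hq1 | hq1 <;>
        simp [hp1, hq1] at hWrel <;> omega
    have := herr x' hEven hlive
    exact ⟨W', A', hWrel, hArel, by rw [← hW', ← hA'] at this; exact this⟩
  obtain ⟨W1, A1, e1, e2, e3⟩ := key i j hij hiT hjT
  obtain ⟨W2, A2, e4, e5, e6⟩ := key i k hik hiT hkT
  obtain ⟨W3, A3, e7, e8, e9⟩ := key j k hjk hjT hkT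
  set ai := (if f i (x i) = some true then (1:ℕ) else 0) with hai
  set bi := (if f i (!(x i)) = some true then (1:ℕ) else 0) with hbi
  set aj := (if f j (x j) = some true then (1:ℕ) else 0) with haj
  set bj := (if f j (!(x j)) = some true then (1:ℕ) else 0) with hbj
  set ak := (if f k (x k) = some true then (1:ℕ) else 0) with hak
  set bk := (if f k (!(x k)) = some true then (1:ℕ) else 0) with hbk
  have bnds : ai ≤ 1 ∧ bi ≤ 1 ∧ aj ≤ 1 ∧ bj ≤ 1 ∧ ak ≤ 1 ∧ bk ≤ 1 := by
    refine ⟨?_, ?_, ?_, ?_, ?_, ?_⟩ <;>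
      first
      | (rw [hai]; split <;> omega)
      | (rw [hbi]; split <;> omega)
      | (rw [haj]; split <;> omega)
      | (rw [hbj]; split <;> omega)
      | (rw [hak]; split <;> omega)
      | (rw [hbk]; split <;> omega)
  obtain ⟨b1, b2, b3, b4, b5, b6⟩ := bnds
  rcases Bool.dichotomy (x i) with hi1 | hi1 <;>
    rcases Bool.dichotomy (x j) with hj1 | hj1 <;>
    rcases Bool.dichotomy (x k) with hk1 | hk1 <;>
    simp only [hi1, hj1, hk1, if_true, if_false, Bool.false_eq_true, reduceIte] at e1 e4 e7 <;>
    omega
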